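/- Let (X,T) be a topological dynamical system on a compact metric space and x ∈ X. If the proximal cell P[x] = {y : (x,y) is proximal} is the singleton {x}, then x is a minimal point, i.e., the orbit closure of x is a minimal subsystem. -/

import Mathlib

open Filter Topology

/-- The pair `(x, y)` is proximal: `liminf_{n→∞} ρ(Tⁿx, Tⁿy) = 0`. -/
def Proximal {X : Type*} [MetricSpace X] (T : X → X) (x y : X) : Prop :=
  Filter.atTop.liminf (fun n : ℕ => dist (T^[n] x) (T^[n] y)) = 0

namespace ProxAux

variable {X : Type*} [MetricSpace X] [CompactSpace X]

/-- Base set of iterates `T^[n]` with `n ≥ N`. -/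
def B (T : X ≃ₜ X) (N : ℕ) : Set (X → X) := {f | ∃ n, N ≤ n ∧ f = (⇑T)^[n]}

/-- Closure of the tail of the iterate sequence in the product topology. -/
def E (T : X ≃ₜ X) (N : ℕ) : Set (X → X) := closure (B T N)

/-- The "adherence semigroup": maps approximable by `T^[n]` with arbitrarily large `n`. -/
def S (T : X ≃ₜ X) : Set (X → X) := ⋂ N, E T N

lemma isClosed_E (T : X ≃ₜ X) (N : ℕ) : IsClosed (E T N) := isClosed_closure

lemma nonempty_E (T : X ≃ₜ X) (N : ℕ) : (E T N).Nonempty :=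
  ⟨(⇑T)^[N], subset_closure ⟨N, le_refl N, rfl⟩⟩

lemma antitone_E (T : X ≃ₜ X) : ∀ {N M : ℕ}, N ≤ M → E T M ⊆ E T N := by
  intro N M h
  apply closure_mono
  rintro f ⟨n, hn, rfl⟩
  exact ⟨n, le_trans h hn, rfl⟩

lemma isClosed_S (T : X ≃ₜ X) : IsClosed (S T) :=
  isClosed_iInter fun N => isClosed_E T N

lemma isCompact_S (T : X ≃ₜ X) : IsCompact (S T) :=
  (isClosed_S T).isCompact

lemma nonempty_S (T : X ≃ₜ X) : (S T).Nonempty := by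
  apply IsCompact.nonempty_iInter_of_directed_nonempty_isCompact_isClosed
    (fun N => E T N)
  · intro a b
    exact ⟨max a b, antitone_E T (le_max_left a b), antitone_E T (le_max_right a b)⟩
  · exact fun N => nonempty_E T N
  · exact fun N => (isClosed_E T N).isCompact
  · exact fun N => isClosed_E T N

lemma mem_S_iff {T : X ≃ₜ X} {f : X → X} : f ∈ S T ↔ ∀ N, f ∈ E T N := Set.mem_iInter

/-- Continuity of right composition. -/
lemma continuous_comp_right (g : X → X) : Continuous fun f : X → X => f ∘ g :=
  continuous_pi fun z => continuous_apply (g z)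

/-- Continuity of left composition by a continuous map. -/
lemma continuous_comp_left {g : X → X} (hg : Continuous g) :
    Continuous fun f : X → X => g ∘ f :=
  continuous_pi fun z => hg.comp (continuous_apply z)

lemma continuous_iterate (T : X ≃ₜ X) (n : ℕ) : Continuous ((⇑T)^[n]) := by
  induction n with
  | zero => exact continuous_id
  | succ n ih =>
    rw [Function.iterate_succ']
    exact T.continuous.comp ih

/-- `T^[n] ∘ g ∈ E T N` for `g ∈ E T N`. -/
lemma iterate_comp_mem {T : X ≃ₜ X} {N : ℕ} {g : X → X} (hg : g ∈ E T N) (n : ℕ) :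
    (⇑T)^[n] ∘ g ∈ E T N := by
  have hcont : Continuous fun f : X → X => (⇑T)^[n] ∘ f :=
    continuous_comp_left (continuous_iterate T n)
  have h1 : (fun f : X → X => (⇑T)^[n] ∘ f) g ∈
      closure ((fun f : X → X => (⇑T)^[n] ∘ f) '' B T N) :=
    (image_closure_subset_closure_image hcont) ⟨g, hg, rfl⟩
  refine closure_mono ?_ h1
  rintro _ ⟨f, ⟨m, hm, rfl⟩, rfl⟩
  exact ⟨n + m, le_trans hm (Nat.le_add_left m n), (Function.iterate_add (⇑T) n m).symm⟩

/-- `S T` is closed under composition. -/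
lemma comp_mem_S {T : X ≃ₜ X} {f g : X → X} (hf : f ∈ S T) (hg : g ∈ S T) :
    f ∘ g ∈ S T := by
  rw [mem_S_iff]
  intro N
  have hgN : g ∈ E T N := mem_S_iff.mp hg N
  have hf0 : f ∈ E T 0 := mem_S_iff.mp hf 0
  have h1 : (fun h : X → X => h ∘ g) f ∈
      closure ((fun h : X → X => h ∘ g) '' B T 0) :=
    (image_closure_subset_closure_image (continuous_comp_right g)) ⟨f, hf0, rfl⟩
  have h2 : closure ((fun h : X → X => h ∘ g) '' B T 0) ⊆ E T N := by
    apply closure_minimal _ (isClosed_E T N)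
    rintro _ ⟨h, ⟨m, _, rfl⟩, rfl⟩
    exact iterate_comp_mem hgN m
  exact h2 h1

/-- `T ∘ s ∈ S T` for `s ∈ S T`. -/
lemma T_comp_mem_S {T : X ≃ₜ X} {s : X → X} (hs : s ∈ S T) : ⇑T ∘ s ∈ S T := by
  rw [mem_S_iff]
  intro N
  have hsN : s ∈ E T N := mem_S_iff.mp hs N
  have h1 : (fun f : X → X => ⇑T ∘ f) s ∈
      closure ((fun f : X → X => ⇑T ∘ f) '' B T N) :=
    (image_closure_subset_closure_image (continuous_comp_left T.continuous)) ⟨s, hsN, rfl⟩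
  refine closure_mono ?_ h1
  rintro _ ⟨f, ⟨m, hm, rfl⟩, rfl⟩
  exact ⟨m + 1, le_trans hm (Nat.le_succ m), (Function.iterate_succ' (⇑T) m).symm⟩

/-- `T⁻¹ ∘ s ∈ S T` for `s ∈ S T`. -/
lemma Tsymm_comp_mem_S {T : X ≃ₜ X} {s : X → X} (hs : s ∈ S T) : ⇑T.symm ∘ s ∈ S T := by
  rw [mem_S_iff]
  intro N
  have hsN : s ∈ E T (N + 1) := mem_S_iff.mp hs (N + 1)
  have h1 : (fun f : X → X => ⇑T.symm ∘ f) s ∈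
      closure ((fun f : X → X => ⇑T.symm ∘ f) '' B T (N + 1)) :=
    (image_closure_subset_closure_image (continuous_comp_left T.symm.continuous))
      ⟨s, hsN, rfl⟩
  refine closure_mono ?_ h1
  rintro _ ⟨f, ⟨m, hm, rfl⟩, rfl⟩
  obtain ⟨k, rfl⟩ : ∃ k, m = k + 1 := ⟨m - 1, by omega⟩
  refine ⟨k, by omega, ?_⟩
  rw [Function.iterate_succ']
  funext z
  simp [Function.comp]

/-- Existence of an idempotent in a nonempty compact subsemigroup of `X → X`. -/
lemma exists_idempotent (K : Set (X → X)) (hne : K.Nonempty) (hcomp : IsCompact K)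
    (hmul : ∀ f ∈ K, ∀ g ∈ K, f ∘ g ∈ K) : ∃ u ∈ K, u ∘ u = u := by
  letI : Semigroup (X → X) := { mul := fun f g => f ∘ g, mul_assoc := fun _ _ _ => rfl }
  have hcm : ∀ r : X → X, Continuous (· * r) := fun r => continuous_comp_right r
  obtain ⟨u, huK, huu⟩ :=
    exists_idempotent_in_compact_subsemigroup hcm K hne hcomp hmul
  exact ⟨u, huK, huu⟩

/-- An idempotent `u ∈ S T` satisfies `Proximal T x (u x)`. -/
lemma proximal_of_idempotent {T : X ≃ₜ X} {u : X → X} (huS : u ∈ S T) (huu : u ∘ u = u)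
    (x : X) : Proximal ⇑T x (u x) := by
  have hfreq : ∀ ε : ℝ, 0 < ε →
      ∃ᶠ n in atTop, dist ((⇑T)^[n] x) ((⇑T)^[n] (u x)) < ε := by
    intro ε hε
    rw [frequently_atTop]
    intro N
    have huN : u ∈ E T N := mem_S_iff.mp huS N
    have hcont : Continuous fun f : X → X => dist (f x) (f (u x)) :=
      (continuous_apply x).dist (continuous_apply (u x))
    have hopen : IsOpen {f : X → X | dist (f x) (f (u x)) < ε} :=
      isOpen_lt hcont continuous_const
    have humem : u ∈ {f : X → X | dist (f x) (f (u x)) < ε} := by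
      have : u (u x) = u x := by
        have := congrFun huu x
        simpa [Function.comp] using this
      simp [this, hε]
    rcases mem_closure_iff.mp huN _ hopen humem with ⟨f, hfo, m, hm, rfl⟩
    exact ⟨m, hm, hfo⟩
  have hbd : IsBoundedUnder (· ≥ ·) atTop
      (fun n : ℕ => dist ((⇑T)^[n] x) ((⇑T)^[n] (u x))) :=
    ⟨0, Filter.eventually_map.mpr (Eventually.of_forall fun n => dist_nonneg)⟩
  obtain ⟨C, hC⟩ := Metric.isBounded_iff.mp (isCompact_univ (X := X)).isBounded
  have hbd2 : IsBoundedUnder (· ≤ ·) atTop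
      (fun n : ℕ => dist ((⇑T)^[n] x) ((⇑T)^[n] (u x))) :=
    ⟨C, Filter.eventually_map.mpr (Eventually.of_forall fun n =>
      hC (Set.mem_univ _) (Set.mem_univ _))⟩
  have hle : atTop.liminf (fun n : ℕ => dist ((⇑T)^[n] x) ((⇑T)^[n] (u x))) ≤ 0 := by
    apply le_of_forall_pos_le_add
    intro ε hε
    rw [zero_add]
    exact liminf_le_of_frequently_le ((hfreq ε hε).mono fun n h => le_of_lt h) hbd
  have hge : (0 : ℝ) ≤ atTop.liminf (fun n : ℕ => dist ((⇑T)^[n] x) ((⇑T)^[n] (u x))) :=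
    le_liminf_of_le hbd2.isCoboundedUnder_ge (Eventually.of_forall fun n => dist_nonneg)
  exact le_antisymm hle hge

end ProxAux

/-- If the proximal cell of `x` is the singleton `{x}`, then `x` is a minimal point:
the closure of its full orbit `{Tⁿx : n ∈ ℤ}` is a minimal subsystem, i.e. it has no
proper nonempty closed invariant subset. -/
theorem minimal_point_of_proximal_cell_singleton {X : Type*} [MetricSpace X] [CompactSpace X]
    (T : X ≃ₜ X) (x : X)
    (hP : {y : X | Proximal ⇑T x y} = {x}) :
    ∀ M : Set X, M ⊆ closure {y : X | ∃ n : ℤ, y = (T.toEquiv ^ n) x} →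
      M.Nonempty → IsClosed M → (∀ z ∈ M, T z ∈ M ∧ T.symm z ∈ M) →
      M = closure {y : X | ∃ n : ℤ, y = (T.toEquiv ^ n) x} := by
  intro M hMsub hMne hMcl hMinv
  open ProxAux in
  -- idempotents of `S T` fix `x`
  have hfix : ∀ u ∈ S T, u ∘ u = u → u x = x := by
    intro u huS huu
    have hprox : Proximal ⇑T x (u x) := proximal_of_idempotent huS huu x
    have : u x ∈ {y : X | Proximal ⇑T x y} := hprox
    rw [hP] at this
    exact this
  -- get some idempotent fixing x
  obtain ⟨u, huS, huu⟩ :=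
    exists_idempotent (S T) (nonempty_S T) (isCompact_S T) fun f hf g hg => comp_mem_S hf hg
  have hux : u x = x := hfix u huS huu
  -- zpow step lemmas
  have hstep1 : ∀ (n : ℤ) (y : X), (T.toEquiv ^ (n + 1)) y = T ((T.toEquiv ^ n) y) := by
    intro n y
    rw [add_comm, zpow_add, zpow_one, Equiv.Perm.mul_apply]
    rfl
  have hstep2 : ∀ (n : ℤ) (y : X), (T.toEquiv ^ (n - 1)) y = T.symm ((T.toEquiv ^ n) y) := by
    intro n y
    rw [show n - 1 = -1 + n by ring, zpow_add, zpow_neg, zpow_one, Equiv.Perm.mul_apply]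
    rfl
  set O : Set X := {y : X | ∃ n : ℤ, y = (T.toEquiv ^ n) x} with hO
  set Sx : Set X := (fun s : X → X => s x) '' S T with hSx
  -- Sx is closed
  have hSx_closed : IsClosed Sx := ((isCompact_S T).image (continuous_apply x)).isClosed
  -- evaluation at any point z sends S T into closure of the forward orbit of z
  have heval : ∀ s ∈ S T, ∀ z : X, s z ∈ closure {y : X | ∃ n : ℕ, y = (⇑T)^[n] z} := by
    intro s hs z
    have hs0 : s ∈ E T 0 := mem_S_iff.mp hs 0
    have h1 : (fun f : X → X => f z) s ∈ closure ((fun f : X → X => f z) '' B T 0) :=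
      (image_closure_subset_closure_image (continuous_apply z)) ⟨s, hs0, rfl⟩
    refine closure_mono ?_ h1
    rintro _ ⟨f, ⟨m, _, rfl⟩, rfl⟩
    exact ⟨m, rfl⟩
  -- closure O ⊆ Sx
  have hOSx : O ⊆ Sx := by
    rintro _ ⟨n, rfl⟩
    induction n using Int.induction_on with
    | zero => exact ⟨u, huS, hux⟩
    | succ n ih =>
      obtain ⟨s, hsS, hsx⟩ := ih
      refine ⟨⇑T ∘ s, T_comp_mem_S hsS, ?_⟩
      rw [hstep1, ← hsx]
      rfl
    | pred n ih =>
      obtain ⟨s, hsS, hsx⟩ := ih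
      refine ⟨⇑T.symm ∘ s, Tsymm_comp_mem_S hsS, ?_⟩
      rw [hstep2, ← hsx]
      rfl
  have hCSx : closure O ⊆ Sx := closure_minimal hOSx hSx_closed
  -- pick z ∈ M, write z = p x
  obtain ⟨z, hzM⟩ := hMne
  obtain ⟨p, hpS, hpx⟩ := hCSx (hMsub hzM)
  -- forward orbit of z stays in M, so S T maps z into M
  have hforward : ∀ n : ℕ, (⇑T)^[n] z ∈ M := by
    intro n
    induction n with
    | zero => exact hzM
    | succ n ih =>
      rw [Function.iterate_succ']
      exact (hMinv _ ih).1
  have hSzM : ∀ s ∈ S T, s z ∈ M := by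
    intro s hs
    have h1 := heval s hs z
    have h2 : closure {y : X | ∃ n : ℕ, y = (⇑T)^[n] z} ⊆ M := by
      apply closure_minimal _ hMcl
      rintro _ ⟨n, rfl⟩
      exact hforward n
    exact h2 h1
  -- idempotent in the compact subsemigroup (S T) ∘ p
  obtain ⟨v, hvK, hvv⟩ := exists_idempotent ((fun q : X → X => q ∘ p) '' S T)
    ⟨u ∘ p, u, huS, rfl⟩
    ((isCompact_S T).image (continuous_comp_right p))
    (by
      rintro _ ⟨q₁, hq₁, rfl⟩ _ ⟨q₂, hq₂, rfl⟩
      exact ⟨q₁ ∘ (p ∘ q₂), comp_mem_S hq₁ (comp_mem_S hpS hq₂), rfl⟩)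
  obtain ⟨q, hqS, rfl⟩ := hvK
  have hvS : q ∘ p ∈ S T := comp_mem_S hqS hpS
  have hvx : (q ∘ p) x = x := hfix _ hvS hvv
  -- hence x ∈ M
  have hxM : x ∈ M := by
    have : q z ∈ M := hSzM q hqS
    have hxq : x = q z := by
      rw [← hvx, ← hpx]
      rfl
    rwa [← hxq] at this
  -- the whole orbit of x lies in M, hence closure O ⊆ M
  have hOM : O ⊆ M := by
    rintro _ ⟨n, rfl⟩
    induction n using Int.induction_on with
    | zero => exact hxM
    | succ n ih =>
      rw [hstep1]
      exact (hMinv _ ih).1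
    | pred n ih =>
      rw [hstep2]
      exact (hMinv _ ih).2
  exact Set.Subset.antisymm hMsub (closure_minimal hOM hMcl)
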